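/- Let R = MvPolynomial (Fin 16) ℚ, let ℍ(R) be the quaternion algebra over R (Mathlib's QuaternionAlgebra R (−1) (−1)), and form the symbolic octonions A = (a + b·i + c·j + d·k, e + f·i + g·j + h·k) and P = (p + q·i + r·j + s·k, t + u·i + v·j + w·k) in ℍ(R) × ℍ(R), where a, b, c, d, e, f, g, h, p, q, r, s, t, u, v, w are the 16 distinct polynomial variables, with the Cayley–Dickson product (x₁, x₂) * (y₁, y₂) := (x₁*y₁ − (star y₂)*x₂, y₂*x₁ + x₂*(star y₁)). Let M be the 8×8 matrix over R whose i-th row consists of the 8 coordinates of A * (eᵢ * P) with respect to the standard octonion basis e₁, …, e₈. Then the 64 entries of M are pairwise distinct polynomials, and M * Mᵀ = ((a² + b² + c² + d² + e² + f² + g² + h²) * (p² + q² + r² + s² + t² + u² + v² + w²)) • (identity matrix); hence M is a symbolic semi-magic square of squares with orthogonal rows and constant N(A)·N(P). -/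

import Mathlib

open Matrix MvPolynomial

/-- The base polynomial ring `ℚ[a,b,…,h,p,q,…,w]` in 16 variables. -/
noncomputable abbrev Rpoly : Type := MvPolynomial (Fin 16) ℚ

/-- The quaternion algebra `ℍ(R)` over the polynomial ring. -/
noncomputable abbrev HR : Type := QuaternionAlgebra Rpoly (-1) 0 (-1)

/-- The Cayley–Dickson product on `ℍ(R) × ℍ(R)`, modelling symbolic
octonions. -/
noncomputable def omulR (x y : HR × HR) : HR × HR :=
  (x.1 * y.1 - star y.2 * x.2, y.2 * x.1 + x.2 * star y.1)

/-- The standard octonion basis `e₁, …, e₈` in `ℍ(R) × ℍ(R)`. -/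
noncomputable def obasisR : Fin 8 → HR × HR
  | 0 => (1, 0)
  | 1 => (⟨0, 1, 0, 0⟩, 0)
  | 2 => (⟨0, 0, 1, 0⟩, 0)
  | 3 => (⟨0, 0, 0, 1⟩, 0)
  | 4 => (0, 1)
  | 5 => (0, ⟨0, 1, 0, 0⟩)
  | 6 => (0, ⟨0, 0, 1, 0⟩)
  | 7 => (0, ⟨0, 0, 0, 1⟩)

/-- The eight coordinates of a symbolic octonion. -/
noncomputable def ocoordR (x : HR × HR) : Fin 8 → Rpoly
  | 0 => x.1.re
  | 1 => x.1.imI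
  | 2 => x.1.imJ
  | 3 => x.1.imK
  | 4 => x.2.re
  | 5 => x.2.imI
  | 6 => x.2.imJ
  | 7 => x.2.imK

/-- The symbolic octonion `A = (a + bi + cj + dk, e + fi + gj + hk)`. -/
noncomputable def Asym : HR × HR :=
  (⟨X 0, X 1, X 2, X 3⟩, ⟨X 4, X 5, X 6, X 7⟩)

/-- The symbolic octonion `P = (p + qi + rj + sk, t + ui + vj + wk)`. -/
noncomputable def Psym : HR × HR :=
  (⟨X 8, X 9, X 10, X 11⟩, ⟨X 12, X 13, X 14, X 15⟩)

set_option maxRecDepth 10000 in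
set_option maxHeartbeats 1000000 in
/-- Explicit form of the matrix entries. -/
noncomputable def Ment : Fin 8 → Fin 8 → Rpoly
  | 0 => fun
    | 0 => X 0 * X 8 - X 1 * X 9 - X 2 * X 10 - X 3 * X 11 - X 4 * X 12 - X 5 * X 13 - X 6 * X 14 - X 7 * X 15
    | 1 => X 0 * X 9 + X 1 * X 8 + X 2 * X 11 - X 3 * X 10 + X 4 * X 13 - X 5 * X 12 - X 6 * X 15 + X 7 * X 14
    | 2 => X 0 * X 10 - X 1 * X 11 + X 2 * X 8 + X 3 * X 9 + X 4 * X 14 + X 5 * X 15 - X 6 * X 12 - X 7 * X 13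
    | 3 => X 0 * X 11 + X 1 * X 10 - X 2 * X 9 + X 3 * X 8 + X 4 * X 15 - X 5 * X 14 + X 6 * X 13 - X 7 * X 12
    | 4 => X 0 * X 12 - X 1 * X 13 - X 2 * X 14 - X 3 * X 15 + X 4 * X 8 + X 5 * X 9 + X 6 * X 10 + X 7 * X 11
    | 5 => X 0 * X 13 + X 1 * X 12 - X 2 * X 15 + X 3 * X 14 - X 4 * X 9 + X 5 * X 8 - X 6 * X 11 + X 7 * X 10
    | 6 => X 0 * X 14 + X 1 * X 15 + X 2 * X 12 - X 3 * X 13 - X 4 * X 10 + X 5 * X 11 + X 6 * X 8 - X 7 * X 9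
    | 7 => X 0 * X 15 - X 1 * X 14 + X 2 * X 13 + X 3 * X 12 - X 4 * X 11 - X 5 * X 10 + X 6 * X 9 + X 7 * X 8
  | 1 => fun
    | 0 => -X 0 * X 9 - X 1 * X 8 + X 2 * X 11 - X 3 * X 10 + X 4 * X 13 - X 5 * X 12 - X 6 * X 15 + X 7 * X 14
    | 1 => X 0 * X 8 - X 1 * X 9 + X 2 * X 10 + X 3 * X 11 + X 4 * X 12 + X 5 * X 13 + X 6 * X 14 + X 7 * X 15
    | 2 => -X 0 * X 11 - X 1 * X 10 - X 2 * X 9 + X 3 * X 8 + X 4 * X 15 - X 5 * X 14 + X 6 * X 13 - X 7 * X 12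
    | 3 => X 0 * X 10 - X 1 * X 11 - X 2 * X 8 - X 3 * X 9 - X 4 * X 14 - X 5 * X 15 + X 6 * X 12 + X 7 * X 13
    | 4 => -X 0 * X 13 - X 1 * X 12 - X 2 * X 15 + X 3 * X 14 - X 4 * X 9 + X 5 * X 8 - X 6 * X 11 + X 7 * X 10
    | 5 => X 0 * X 12 - X 1 * X 13 + X 2 * X 14 + X 3 * X 15 - X 4 * X 8 - X 5 * X 9 - X 6 * X 10 - X 7 * X 11
    | 6 => X 0 * X 15 - X 1 * X 14 - X 2 * X 13 - X 3 * X 12 + X 4 * X 11 + X 5 * X 10 - X 6 * X 9 - X 7 * X 8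
    | 7 => -X 0 * X 14 - X 1 * X 15 + X 2 * X 12 - X 3 * X 13 - X 4 * X 10 + X 5 * X 11 + X 6 * X 8 - X 7 * X 9
  | 2 => fun
    | 0 => -X 0 * X 10 - X 1 * X 11 - X 2 * X 8 + X 3 * X 9 + X 4 * X 14 + X 5 * X 15 - X 6 * X 12 - X 7 * X 13
    | 1 => X 0 * X 11 - X 1 * X 10 - X 2 * X 9 - X 3 * X 8 - X 4 * X 15 + X 5 * X 14 - X 6 * X 13 + X 7 * X 12
    | 2 => X 0 * X 8 + X 1 * X 9 - X 2 * X 10 + X 3 * X 11 + X 4 * X 12 + X 5 * X 13 + X 6 * X 14 + X 7 * X 15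
    | 3 => -X 0 * X 9 + X 1 * X 8 - X 2 * X 11 - X 3 * X 10 + X 4 * X 13 - X 5 * X 12 - X 6 * X 15 + X 7 * X 14
    | 4 => -X 0 * X 14 + X 1 * X 15 - X 2 * X 12 - X 3 * X 13 - X 4 * X 10 + X 5 * X 11 + X 6 * X 8 - X 7 * X 9
    | 5 => -X 0 * X 15 - X 1 * X 14 - X 2 * X 13 + X 3 * X 12 - X 4 * X 11 - X 5 * X 10 + X 6 * X 9 + X 7 * X 8
    | 6 => X 0 * X 12 + X 1 * X 13 - X 2 * X 14 + X 3 * X 15 - X 4 * X 8 - X 5 * X 9 - X 6 * X 10 - X 7 * X 11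
    | 7 => X 0 * X 13 - X 1 * X 12 - X 2 * X 15 - X 3 * X 14 + X 4 * X 9 - X 5 * X 8 + X 6 * X 11 - X 7 * X 10
  | 3 => fun
    | 0 => -X 0 * X 11 + X 1 * X 10 - X 2 * X 9 - X 3 * X 8 + X 4 * X 15 - X 5 * X 14 + X 6 * X 13 - X 7 * X 12
    | 1 => -X 0 * X 10 - X 1 * X 11 + X 2 * X 8 - X 3 * X 9 + X 4 * X 14 + X 5 * X 15 - X 6 * X 12 - X 7 * X 13
    | 2 => X 0 * X 9 - X 1 * X 8 - X 2 * X 11 - X 3 * X 10 - X 4 * X 13 + X 5 * X 12 + X 6 * X 15 - X 7 * X 14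
    | 3 => X 0 * X 8 + X 1 * X 9 + X 2 * X 10 - X 3 * X 11 + X 4 * X 12 + X 5 * X 13 + X 6 * X 14 + X 7 * X 15
    | 4 => -X 0 * X 15 - X 1 * X 14 + X 2 * X 13 - X 3 * X 12 - X 4 * X 11 - X 5 * X 10 + X 6 * X 9 + X 7 * X 8
    | 5 => X 0 * X 14 - X 1 * X 15 - X 2 * X 12 - X 3 * X 13 + X 4 * X 10 - X 5 * X 11 - X 6 * X 8 + X 7 * X 9
    | 6 => -X 0 * X 13 + X 1 * X 12 - X 2 * X 15 - X 3 * X 14 - X 4 * X 9 + X 5 * X 8 - X 6 * X 11 + X 7 * X 10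
    | 7 => X 0 * X 12 + X 1 * X 13 + X 2 * X 14 - X 3 * X 15 - X 4 * X 8 - X 5 * X 9 - X 6 * X 10 - X 7 * X 11
  | 4 => fun
    | 0 => -X 0 * X 12 - X 1 * X 13 - X 2 * X 14 - X 3 * X 15 - X 4 * X 8 + X 5 * X 9 + X 6 * X 10 + X 7 * X 11
    | 1 => X 0 * X 13 - X 1 * X 12 + X 2 * X 15 - X 3 * X 14 - X 4 * X 9 - X 5 * X 8 + X 6 * X 11 - X 7 * X 10
    | 2 => X 0 * X 14 - X 1 * X 15 - X 2 * X 12 + X 3 * X 13 - X 4 * X 10 - X 5 * X 11 - X 6 * X 8 + X 7 * X 9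
    | 3 => X 0 * X 15 + X 1 * X 14 - X 2 * X 13 - X 3 * X 12 - X 4 * X 11 + X 5 * X 10 - X 6 * X 9 - X 7 * X 8
    | 4 => X 0 * X 8 + X 1 * X 9 + X 2 * X 10 + X 3 * X 11 - X 4 * X 12 + X 5 * X 13 + X 6 * X 14 + X 7 * X 15
    | 5 => -X 0 * X 9 + X 1 * X 8 + X 2 * X 11 - X 3 * X 10 - X 4 * X 13 - X 5 * X 12 - X 6 * X 15 + X 7 * X 14
    | 6 => -X 0 * X 10 - X 1 * X 11 + X 2 * X 8 + X 3 * X 9 - X 4 * X 14 + X 5 * X 15 - X 6 * X 12 - X 7 * X 13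
    | 7 => -X 0 * X 11 + X 1 * X 10 - X 2 * X 9 + X 3 * X 8 - X 4 * X 15 - X 5 * X 14 + X 6 * X 13 - X 7 * X 12
  | 5 => fun
    | 0 => -X 0 * X 13 + X 1 * X 12 - X 2 * X 15 + X 3 * X 14 - X 4 * X 9 - X 5 * X 8 - X 6 * X 11 + X 7 * X 10
    | 1 => -X 0 * X 12 - X 1 * X 13 - X 2 * X 14 - X 3 * X 15 + X 4 * X 8 - X 5 * X 9 + X 6 * X 10 + X 7 * X 11
    | 2 => X 0 * X 15 + X 1 * X 14 - X 2 * X 13 - X 3 * X 12 + X 4 * X 11 - X 5 * X 10 - X 6 * X 9 - X 7 * X 8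
    | 3 => -X 0 * X 14 + X 1 * X 15 + X 2 * X 12 - X 3 * X 13 - X 4 * X 10 - X 5 * X 11 + X 6 * X 8 - X 7 * X 9
    | 4 => X 0 * X 9 - X 1 * X 8 - X 2 * X 11 + X 3 * X 10 - X 4 * X 13 - X 5 * X 12 + X 6 * X 15 - X 7 * X 14
    | 5 => X 0 * X 8 + X 1 * X 9 + X 2 * X 10 + X 3 * X 11 + X 4 * X 12 - X 5 * X 13 + X 6 * X 14 + X 7 * X 15
    | 6 => X 0 * X 11 - X 1 * X 10 + X 2 * X 9 - X 3 * X 8 - X 4 * X 15 - X 5 * X 14 - X 6 * X 13 + X 7 * X 12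
    | 7 => -X 0 * X 10 - X 1 * X 11 + X 2 * X 8 + X 3 * X 9 + X 4 * X 14 - X 5 * X 15 - X 6 * X 12 - X 7 * X 13
  | 6 => fun
    | 0 => -X 0 * X 14 + X 1 * X 15 + X 2 * X 12 - X 3 * X 13 - X 4 * X 10 + X 5 * X 11 - X 6 * X 8 - X 7 * X 9
    | 1 => -X 0 * X 15 - X 1 * X 14 + X 2 * X 13 + X 3 * X 12 - X 4 * X 11 - X 5 * X 10 - X 6 * X 9 + X 7 * X 8
    | 2 => -X 0 * X 12 - X 1 * X 13 - X 2 * X 14 - X 3 * X 15 + X 4 * X 8 + X 5 * X 9 - X 6 * X 10 + X 7 * X 11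
    | 3 => X 0 * X 13 - X 1 * X 12 + X 2 * X 15 - X 3 * X 14 + X 4 * X 9 - X 5 * X 8 - X 6 * X 11 - X 7 * X 10
    | 4 => X 0 * X 10 + X 1 * X 11 - X 2 * X 8 - X 3 * X 9 - X 4 * X 14 - X 5 * X 15 - X 6 * X 12 + X 7 * X 13
    | 5 => -X 0 * X 11 + X 1 * X 10 - X 2 * X 9 + X 3 * X 8 + X 4 * X 15 - X 5 * X 14 - X 6 * X 13 - X 7 * X 12
    | 6 => X 0 * X 8 + X 1 * X 9 + X 2 * X 10 + X 3 * X 11 + X 4 * X 12 + X 5 * X 13 - X 6 * X 14 + X 7 * X 15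
    | 7 => X 0 * X 9 - X 1 * X 8 - X 2 * X 11 + X 3 * X 10 - X 4 * X 13 + X 5 * X 12 - X 6 * X 15 - X 7 * X 14
  | 7 => fun
    | 0 => -X 0 * X 15 - X 1 * X 14 + X 2 * X 13 + X 3 * X 12 - X 4 * X 11 - X 5 * X 10 + X 6 * X 9 - X 7 * X 8
    | 1 => X 0 * X 14 - X 1 * X 15 - X 2 * X 12 + X 3 * X 13 + X 4 * X 10 - X 5 * X 11 - X 6 * X 8 - X 7 * X 9
    | 2 => -X 0 * X 13 + X 1 * X 12 - X 2 * X 15 + X 3 * X 14 - X 4 * X 9 + X 5 * X 8 - X 6 * X 11 - X 7 * X 10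
    | 3 => -X 0 * X 12 - X 1 * X 13 - X 2 * X 14 - X 3 * X 15 + X 4 * X 8 + X 5 * X 9 + X 6 * X 10 - X 7 * X 11
    | 4 => X 0 * X 11 - X 1 * X 10 + X 2 * X 9 - X 3 * X 8 - X 4 * X 15 + X 5 * X 14 - X 6 * X 13 - X 7 * X 12
    | 5 => X 0 * X 10 + X 1 * X 11 - X 2 * X 8 - X 3 * X 9 - X 4 * X 14 - X 5 * X 15 + X 6 * X 12 - X 7 * X 13
    | 6 => -X 0 * X 9 + X 1 * X 8 + X 2 * X 11 - X 3 * X 10 + X 4 * X 13 - X 5 * X 12 - X 6 * X 15 - X 7 * X 14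
    | 7 => X 0 * X 8 + X 1 * X 9 + X 2 * X 10 + X 3 * X 11 + X 4 * X 12 + X 5 * X 13 + X 6 * X 14 - X 7 * X 15

/-- Evaluation point (on `ℕ`) distinguishing the 64 entries. -/
def evN : ℕ → ℚ
  | 0 => 30
  | 1 => 48
  | 2 => 45
  | 3 => 186
  | 4 => 88
  | 5 => 159
  | 6 => 130
  | 7 => 110
  | 8 => 20
  | 9 => 299
  | 10 => 83
  | 11 => 222
  | 12 => 203
  | 13 => 262
  | 14 => 192
  | 15 => 280
  | _ => 0

/-- Evaluation point as a function on `Fin 16`. -/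
def evptF : Fin 16 → ℚ := fun i => evN i.val

/-- Values of the 64 entries at `evptF`. -/
def valsF : Fin 8 → Fin 8 → ℚ
  | 0 => fun
    | 0 => -174061
    | 1 => -20019
    | 2 => 54554
    | 3 => 6751
    | 4 => 17305
    | 5 => -2146
    | 6 => -22693
    | 7 => 57069
  | 1 => fun
    | 0 => -39879
    | 1 => 146557
    | 2 => -14537
    | 3 => -70886
    | 4 => -37354
    | 5 => -30277
    | 6 => -58701
    | 7 => -61093
  | 2 => fun
    | 0 => 47774
    | 1 => -20341
    | 2 => 167791
    | 3 => -57939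
    | 4 => -52483
    | 5 => 16689
    | 6 => -22405
    | 7 => -7334
  | 3 => fun
    | 0 => -14009
    | 1 => -61654
    | 2 => 7083
    | 3 => 92677
    | 4 => -35247
    | 5 => -63251
    | 6 => -89290
    | 7 => -109285
  | 4 => fun
    | 0 => 1605
    | 1 => -34758
    | 2 => 19605
    | 3 => -79341
    | 4 => 139533
    | 5 => -84071
    | 6 => 15782
    | 7 => -55849
  | 5 => fun
    | 0 => -24226
    | 1 => -89957
    | 2 => -66663
    | 3 => -104809
    | 4 => -26595
    | 5 => 91945
    | 6 => -54487
    | 7 => -39466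
  | 6 => fun
    | 0 => -39413
    | 1 => -37471
    | 2 => -16455
    | 3 => -39854
    | 4 => -102354
    | 5 => -74689
    | 6 => 125341
    | 7 => -34841
  | 7 => fun
    | 0 => 35869
    | 1 => -31567
    | 2 => -36126
    | 3 => -43715
    | 4 => -38091
    | 5 => -107214
    | 6 => -80199
    | 7 => 113661

set_option maxRecDepth 100000 in
lemma valsF_inj : ∀ x y : Fin 8 × Fin 8, valsF x.1 x.2 = valsF y.1 y.2 → x = y := by decide

set_option maxRecDepth 10000 in
set_option maxHeartbeats 1000000 in
lemma eval_Ment : ∀ i j, MvPolynomial.eval evptF (Ment i j) = valsF i j := by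
  intro i j
  fin_cases i <;> fin_cases j <;>
    · simp only [Ment, valsF, _root_.map_add, _root_.map_sub, _root_.map_mul, _root_.map_neg, MvPolynomial.eval_X]
      norm_num [evptF, evN]

set_option maxRecDepth 10000 in
set_option maxHeartbeats 4000000 in
/-- The paper's theorem: the symbolic 8×8 matrix whose `i`-th row consists of
the coordinates of `A * (eᵢ * P)` has pairwise distinct entries and satisfies
`M * Mᵀ = N(A)N(P) • I`, i.e. it is a symbolic semi-magic square of squares
with orthogonal rows and constant `N(A)·N(P)`. -/
theorem symbolic_octonion_semimagic
    (M : Matrix (Fin 8) (Fin 8) Rpoly)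
    (hM : ∀ i j, M i j = ocoordR (omulR Asym (omulR (obasisR i) Psym)) j) :
    Function.Injective (fun ij : Fin 8 × Fin 8 => M ij.1 ij.2) ∧
    M * Mᵀ =
      ((X 0 ^ 2 + X 1 ^ 2 + X 2 ^ 2 + X 3 ^ 2 +
        X 4 ^ 2 + X 5 ^ 2 + X 6 ^ 2 + X 7 ^ 2) *
       (X 8 ^ 2 + X 9 ^ 2 + X 10 ^ 2 + X 11 ^ 2 +
        X 12 ^ 2 + X 13 ^ 2 + X 14 ^ 2 + X 15 ^ 2) : Rpoly) •
      (1 : Matrix (Fin 8) (Fin 8) Rpoly) := by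
  have hMe : ∀ i j, M i j = Ment i j := by
    intro i j
    rw [hM i j]
    fin_cases i <;> fin_cases j <;>
      · simp only [omulR, obasisR, ocoordR, Asym, Psym, QuaternionAlgebra.re_mul,
    QuaternionAlgebra.imI_mul, QuaternionAlgebra.imJ_mul, QuaternionAlgebra.imK_mul,
    QuaternionAlgebra.re_sub, QuaternionAlgebra.imI_sub, QuaternionAlgebra.imJ_sub,
    QuaternionAlgebra.imK_sub, QuaternionAlgebra.re_add, QuaternionAlgebra.imI_add,
    QuaternionAlgebra.imJ_add, QuaternionAlgebra.imK_add, QuaternionAlgebra.re_star,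
    QuaternionAlgebra.imI_star, QuaternionAlgebra.imJ_star, QuaternionAlgebra.imK_star,
    QuaternionAlgebra.re_one, QuaternionAlgebra.imI_one, QuaternionAlgebra.imJ_one,
    QuaternionAlgebra.imK_one, QuaternionAlgebra.re_zero, QuaternionAlgebra.imI_zero,
    QuaternionAlgebra.imJ_zero, QuaternionAlgebra.imK_zero, Ment]
        ring
  constructor
  · intro x y h
    have h' : Ment x.1 x.2 = Ment y.1 y.2 := by rw [← hMe, ← hMe]; exact h
    have h2 : valsF x.1 x.2 = valsF y.1 y.2 := by
      rw [← eval_Ment, ← eval_Ment, h']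
    exact valsF_inj x y h2
  · refine Matrix.ext fun i k => ?_
    rw [Matrix.mul_apply, Fin.sum_univ_eight]
    fin_cases i <;> fin_cases k <;>
      · simp only [Matrix.transpose_apply, Matrix.smul_apply, Matrix.one_apply, smul_eq_mul,
          hMe, Ment, Fin.isValue, Fin.mk.injEq]
        norm_num
        try ring
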